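/- Let f : [0,∞) → [0,∞) be continuous with f(x) → ∞, and suppose (|Z_t|) and (|X_t|) are coupled so that conditionally on X, |Z_t| is Poisson with mean |X_t| at any a.s.-finite stopping time, and a.s. limsup_t |Z_t|/f(t) ≤ 1. If with positive probability |X_t| > (1+ε) f(t) for arbitrarily large times (for some ε > 0), then with positive probability |Z_t| > (1+ε/2) f(t) for arbitrarily large times — a contradiction; hence almost surely limsup_t |X_t|/f(t) ≤ 1. -/

import Mathlib

open MeasureTheory ProbabilityTheory Filter
open scoped NNReal ENNReal

open scoped Topology

noncomputable def pzHexp (ε : ℝ) : ℝ := ε/2 - (1+ε/2) * Real.log ((1+ε)/(1+ε/2))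

lemma pzHexp_pos {ε : ℝ} (hε : 0 < ε) : 0 < pzHexp ε := by
  have h1 : (0:ℝ) < 1 + ε/2 := by linarith
  have h2 : (0:ℝ) < (1+ε)/(1+ε/2) := by positivity
  have h3 : (1+ε)/(1+ε/2) ≠ 1 := by
    intro h
    have := (div_eq_one_iff_eq (by positivity : (1:ℝ)+ε/2 ≠ 0)).mp h
    linarith
  have hlog := Real.log_lt_sub_one_of_pos h2 h3
  have : (1+ε)/(1+ε/2) - 1 = (ε/2)/(1+ε/2) := by field_simp; ring
  rw [this] at hlog
  have := mul_lt_mul_of_pos_left hlog h1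
  rw [mul_div_cancel₀ _ (ne_of_gt h1)] at this
  unfold pzHexp
  nlinarith

lemma pz_chernoff (r : ℝ≥0) (m : ℕ) {s : ℝ} (hs0 : 0 < s) (hs1 : s ≤ 1) :
    ∑ k ∈ Finset.range (m + 1), poissonPMFReal r k
      ≤ Real.exp (s * r - r) * (1 / s) ^ m := by
  have h1s : 1 ≤ 1 / s := by rw [le_div_iff₀ hs0]; simpa using hs1
  have key : ∀ k ∈ Finset.range (m+1),
      poissonPMFReal r k ≤ Real.exp (-(r:ℝ)) * ((s * r) ^ k / k.factorial) * (1/s)^m := by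
    intro k hk
    have hk' : k ≤ m := Nat.lt_succ_iff.mp (Finset.mem_range.mp hk)
    have hr : (0:ℝ) ≤ r := r.coe_nonneg
    have hrk : (r:ℝ)^k = (s*r)^k * (1/s)^k := by
      rw [← mul_pow, mul_comm s, mul_assoc, mul_one_div_cancel hs0.ne', mul_one]
    unfold poissonPMFReal
    rw [hrk]
    have hpow : (1/s:ℝ)^k ≤ (1/s)^m := pow_le_pow_right₀ h1s hk'
    have hnn : (0:ℝ) ≤ Real.exp (-(r:ℝ)) * ((s*r)^k / k.factorial) := by positivity
    calc Real.exp (-(r:ℝ)) * ((s*r)^k * (1/s)^k) / k.factorial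
        = (Real.exp (-(r:ℝ)) * ((s*r)^k / k.factorial)) * (1/s)^k := by ring
      _ ≤ (Real.exp (-(r:ℝ)) * ((s*r)^k / k.factorial)) * (1/s)^m := by
          exact mul_le_mul_of_nonneg_left hpow hnn
  calc ∑ k ∈ Finset.range (m + 1), poissonPMFReal r k
      ≤ ∑ k ∈ Finset.range (m+1), Real.exp (-(r:ℝ)) * ((s * r) ^ k / k.factorial) * (1/s)^m :=
        Finset.sum_le_sum key
    _ = Real.exp (-(r:ℝ)) * (∑ k ∈ Finset.range (m+1), (s * r) ^ k / k.factorial) * (1/s)^m := by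
        rw [Finset.mul_sum, Finset.sum_mul]
    _ ≤ Real.exp (-(r:ℝ)) * Real.exp (s*r) * (1/s)^m := by
        have := Real.sum_le_exp_of_nonneg (by positivity : (0:ℝ) ≤ s * r) (m+1)
        have h2 : (0:ℝ) ≤ (1/s)^m := by positivity
        exact mul_le_mul_of_nonneg_right
          (mul_le_mul_of_nonneg_left this (Real.exp_nonneg _)) h2
    _ = Real.exp (s * r - r) * (1 / s) ^ m := by rw [← Real.exp_add]; ring_nf

lemma pz_poisson_bound {ε F : ℝ} (hε : 0 < ε) (hF : 0 ≤ F) (r : ℝ≥0)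
    (hr : (1+ε) * F ≤ (r:ℝ)) (m : ℕ) (hm : (m:ℝ) ≤ (1+ε/2) * F) :
    ∑ k ∈ Finset.range (m + 1), poissonPMFReal r k ≤ Real.exp (-(pzHexp ε) * F) := by
  set s : ℝ := (1+ε/2)/(1+ε) with hs
  have hd : (0:ℝ) < 1 + ε := by linarith
  have hn : (0:ℝ) < 1 + ε/2 := by linarith
  have hs0 : 0 < s := by positivity
  have hs1 : s ≤ 1 := by rw [hs, div_le_one hd]; linarith
  have hinv : 1/s = (1+ε)/(1+ε/2) := by rw [hs, one_div_div]
  have hinv1 : 1 ≤ 1/s := by rw [le_div_iff₀ hs0]; simpa using hs1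
  have hlognn : 0 ≤ Real.log (1/s) := Real.log_nonneg hinv1
  refine (pz_chernoff r m hs0 hs1).trans ?_
  have hpow : ((1:ℝ)/s)^m = Real.exp (m * Real.log (1/s)) := by
    rw [← Real.log_pow, Real.exp_log (by positivity)]
  rw [hpow, ← Real.exp_add]
  apply Real.exp_le_exp.mpr
  have h1 : s * r - r = -((1-s) * r) := by ring
  have h1s : 0 < 1 - s ∨ 0 = 1 - s := by
    rcases lt_or_eq_of_le hs1 with h | h
    · left; linarith
    · right; linarith
  have hsr : (1-s) * ((1+ε)*F) ≤ (1-s) * r := by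
    apply mul_le_mul_of_nonneg_left hr; linarith
  have hkey : (1-s)*(1+ε) = ε/2 := by
    have : s * (1+ε) = 1+ε/2 := by
      rw [hs, div_mul_cancel₀ _ (ne_of_gt hd)]
    nlinarith
  have h2 : s * r - r ≤ -(ε/2 * F) := by
    rw [h1]
    have : (1-s) * ((1+ε)*F) = ε/2 * F := by rw [← mul_assoc, hkey]
    linarith [hsr]
  have h3 : (m:ℝ) * Real.log (1/s) ≤ (1+ε/2)*F * Real.log (1/s) :=
    mul_le_mul_of_nonneg_right hm hlognn
  have : -(pzHexp ε) * F = -(ε/2*F) + (1+ε/2)*F * Real.log ((1+ε)/(1+ε/2)) := by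
    unfold pzHexp; ring
  rw [this, ← hinv]
  linarith

lemma pz_stopping {Ω : Type*} {mΩ : MeasurableSpace Ω} (ℱ : Filtration ℝ mΩ)
    {Y : ℝ → Ω → ℝ} (hY : ∀ t, Measurable[ℱ t] (Y t))
    (hYc : ∀ ω, Continuous fun t => Y t ω) (n M : ℝ) (hnM : n ≤ M) :
    ∃ τ : Ω → ℝ, IsStoppingTime ℱ (fun ω => (τ ω : WithTop ℝ)) ∧ (∀ ω, τ ω ∈ Set.Icc n M) ∧
      (∀ ω, (∃ s ∈ Set.Icc n M, 0 ≤ Y s ω) ↔ 0 ≤ Y (τ ω) ω) := by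
  classical
  set S : Ω → Set ℝ := fun ω => {t | t ∈ Set.Icc n M ∧ 0 ≤ Y t ω} ∪ {M} with hS
  have hSne : ∀ ω, (S ω).Nonempty := fun ω => ⟨M, Or.inr rfl⟩
  have hSsub : ∀ ω, S ω ⊆ Set.Icc n M := by
    intro ω t ht
    rcases ht with ⟨h1, _⟩ | h
    · exact h1
    · simp only [Set.mem_singleton_iff] at h; subst h; exact ⟨hnM, le_rfl⟩
  have hSbdd : ∀ ω, BddBelow (S ω) := fun ω => ⟨n, fun t ht => (hSsub ω ht).1⟩
  have hSclosed : ∀ ω, IsClosed (S ω) := by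
    intro ω
    apply IsClosed.union
    · have : {t | t ∈ Set.Icc n M ∧ 0 ≤ Y t ω} = Set.Icc n M ∩ {t | 0 ≤ Y t ω} := rfl
      rw [this]
      exact isClosed_Icc.inter (isClosed_le continuous_const (hYc ω))
    · exact isClosed_singleton
  set τ : Ω → ℝ := fun ω => sInf (S ω) with hτdef
  have hτmem : ∀ ω, τ ω ∈ S ω := fun ω => (hSclosed ω).csInf_mem (hSne ω) (hSbdd ω)
  have hτIcc : ∀ ω, τ ω ∈ Set.Icc n M := fun ω => hSsub ω (hτmem ω)
  have hτiff : ∀ ω, (∃ s ∈ Set.Icc n M, 0 ≤ Y s ω) ↔ 0 ≤ Y (τ ω) ω := by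
    intro ω
    constructor
    · rintro ⟨s, hsIcc, hsY⟩
      rcases hτmem ω with ⟨_, h⟩ | h
      · exact h
      · simp only [Set.mem_singleton_iff] at h
        have hle : τ ω ≤ s := csInf_le (hSbdd ω) (Or.inl ⟨hsIcc, hsY⟩)
        have hsM : s = M := le_antisymm hsIcc.2 (h ▸ hle)
        rw [h, ← hsM]; exact hsY
    · intro h
      exact ⟨τ ω, hτIcc ω, h⟩
  refine ⟨τ, ?_, hτIcc, hτiff⟩
  intro t
  simp only [WithTop.coe_le_coe]
  by_cases ht1 : t < n
  · have : {ω | τ ω ≤ t} = ∅ := by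
      ext ω; simp only [Set.mem_setOf_eq, Set.mem_empty_iff_false, iff_false, not_le]
      exact lt_of_lt_of_le ht1 (hτIcc ω).1
    rw [this]; exact @MeasurableSet.empty _ (ℱ t)
  push_neg at ht1
  by_cases ht2 : M ≤ t
  · have : {ω | τ ω ≤ t} = Set.univ := by
      ext ω; simp only [Set.mem_setOf_eq, Set.mem_univ, iff_true]
      exact le_trans (hτIcc ω).2 ht2
    rw [this]; exact MeasurableSet.univ
  push_neg at ht2
  have hkey : {ω | τ ω ≤ t} = ⋂ k : ℕ, ({ω | -(1/(k+1)) < Y t ω} ∪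
      ⋃ (q : ℚ) (_ : (q:ℝ) ∈ Set.Icc n t), {ω | -(1/(k+1)) < Y (q:ℝ) ω}) := by
    ext ω
    simp only [Set.mem_setOf_eq, Set.mem_iInter, Set.mem_union, Set.mem_iUnion]
    constructor
    · intro hτt k
      have h0 : 0 ≤ Y (τ ω) ω := by
        rcases hτmem ω with ⟨_, h⟩ | h
        · exact h
        · exfalso; simp only [Set.mem_singleton_iff] at h
          rw [h] at hτt; exact absurd hτt (not_le.mpr ht2)
      have hpos : (0:ℝ) < 1/(k+1) := by positivity
      obtain ⟨δ, hδ, hball⟩ := Metric.continuous_iff.mp (hYc ω) (τ ω) (1/(k+1)) hpos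
      by_cases hτeq : τ ω = t
      · left; rw [← hτeq]; linarith
      · right
        have hτlt : τ ω < t := lt_of_le_of_ne hτt hτeq
        obtain ⟨q, hq1, hq2⟩ := exists_rat_btwn (lt_min (by linarith : τ ω < τ ω + δ) hτlt)
        rw [lt_min_iff] at hq2
        refine ⟨q, ⟨le_trans (hτIcc ω).1 hq1.le, hq2.2.le⟩, ?_⟩
        have hdist : dist (q:ℝ) (τ ω) < δ := by
          rw [Real.dist_eq, abs_lt]
          constructor
          · linarith [hq1]
          · linarith [hq2.1]
        have hb := hball q hdist
        rw [Real.dist_eq, abs_lt] at hb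
        linarith [hb.1]
    · intro hk
      have hex : ∀ k : ℕ, ∃ u : ℝ, u ∈ Set.Icc n t ∧ -(1/(k+1:ℝ)) < Y u ω := by
        intro k
        rcases hk k with h | ⟨q, hq1, hq2⟩
        · exact ⟨t, ⟨ht1, le_rfl⟩, h⟩
        · exact ⟨q, hq1, hq2⟩
      choose u hu1 hu2 using hex
      obtain ⟨x, hx, φ, hφmono, hφtend⟩ := (isCompact_Icc).tendsto_subseq hu1
      have hYx : 0 ≤ Y x ω := by
        have htend : Tendsto (fun k => Y (u (φ k)) ω) atTop (𝓝 (Y x ω)) :=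
          ((hYc ω).tendsto x).comp hφtend
        have hlow : Tendsto (fun k : ℕ => -(1/(k+1:ℝ))) atTop (𝓝 0) := by
          rw [← neg_zero]
          exact (tendsto_one_div_add_atTop_nhds_zero_nat).neg
        refine le_of_tendsto_of_tendsto' hlow htend fun k => ?_
        have hcast : (k:ℝ)+1 ≤ (φ k:ℝ)+1 := by
          have := hφmono.le_apply (x := k)
          have : (k:ℝ) ≤ (φ k:ℝ) := by exact_mod_cast this
          linarith
        have h0 : (0:ℝ) < (k:ℝ)+1 := by positivity
        have h1 : 1/((φ k:ℝ)+1) ≤ 1/((k:ℝ)+1) := one_div_le_one_div_of_le h0 hcast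
        have h2 : -(1/(k+1:ℝ)) ≤ -(1/((φ k:ℝ)+1)) := by linarith
        exact le_trans h2 (hu2 (φ k)).le
      have hxS : x ∈ S ω := Or.inl ⟨⟨hx.1, le_trans hx.2 (le_of_lt ht2)⟩, hYx⟩
      exact le_trans (csInf_le (hSbdd ω) hxS) hx.2
  rw [hkey]
  apply MeasurableSet.iInter
  intro k
  apply MeasurableSet.union
  · exact measurableSet_lt measurable_const (hY t)
  · apply MeasurableSet.iUnion
    intro q
    apply MeasurableSet.iUnion
    intro hq
    exact ℱ.mono hq.2 _ (measurableSet_lt measurable_const (hY q))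

lemma pz_main {Ω : Type*} {mΩ : MeasurableSpace Ω} (P : Measure Ω) [IsProbabilityMeasure P]
    (ℱ : Filtration ℝ mΩ)
    (X : ℝ → Ω → ℝ≥0) (Z : ℝ → Ω → ℕ)
    (hXadapted : ∀ t, Measurable[ℱ t] (X t))
    (hXcont : ∀ ω, Continuous fun t => (X t ω : ℝ))
    (f : ℝ → ℝ) (hf_cont : Continuous f) (hf_nn : ∀ t, 0 ≤ f t)
    (hcoupling : ∀ (τ : Ω → ℝ) (hτ : IsStoppingTime ℱ (fun ω => (τ ω : WithTop ℝ))), (∀ ω, 0 ≤ τ ω) →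
      ∀ n : ℕ,
        P[(fun ω => if Z (τ ω) ω ≤ n then (1:ℝ) else 0) | hτ.measurableSpace]
          =ᵐ[P] fun ω => ∑ k ∈ Finset.range (n + 1), poissonPMFReal (X (τ ω) ω) k)
    {ε : ℝ} (hε : 0 < ε) (n M : ℕ) (hnM : (n:ℝ) ≤ (M:ℝ)) (L : ℝ)
    (hL : ∀ t : ℝ, (n:ℝ) ≤ t → L ≤ f t) :
    ∃ E : Set Ω, MeasurableSet E ∧
      (∀ ω ∈ E, ∃ t : ℝ, (n:ℝ) ≤ t ∧ (1+ε/2) * f t < (Z t ω : ℝ)) ∧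
      P {ω | ∃ s ∈ Set.Icc (n:ℝ) (M:ℝ), 0 ≤ (X s ω : ℝ) - (1+ε) * f s}
        ≤ P E + ENNReal.ofReal (Real.exp (-(pzHexp ε) * L)) := by
  classical
  set Y : ℝ → Ω → ℝ := fun t ω => (X t ω : ℝ) - (1+ε) * f t with hY
  have hYmeas : ∀ t, Measurable[ℱ t] (Y t) := fun t =>
    (measurable_coe_nnreal_real.comp (hXadapted t)).sub measurable_const
  have hYc : ∀ ω, Continuous fun t => Y t ω := fun ω =>
    (hXcont ω).sub (continuous_const.mul hf_cont)
  obtain ⟨τ, hτ, hτIcc, hτiff⟩ := pz_stopping ℱ hYmeas hYc _ _ hnM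
  have hτ0 : ∀ ω, 0 ≤ τ ω := fun ω => le_trans (Nat.cast_nonneg n) (hτIcc ω).1
  have hmle : hτ.measurableSpace ≤ mΩ := hτ.measurableSpace_le
  have hτmeas : Measurable[hτ.measurableSpace] τ := hτ.measurable.untopA
  have hadapted : StronglyAdapted ℱ Y := fun t => (hYmeas t).stronglyMeasurable
  have hprog : ProgMeasurable ℱ Y := hadapted.progMeasurable_of_continuous hYc
  have hYτ : Measurable[hτ.measurableSpace] (fun ω => Y (τ ω) ω) := measurable_stoppedValue hprog hτ
  have hfτ : Measurable[hτ.measurableSpace] (fun ω => f (τ ω)) := hf_cont.measurable.comp hτmeas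
  set xr : Ω → ℝ := fun ω => (X (τ ω) ω : ℝ) with hxr
  have hxrmeas : Measurable[hτ.measurableSpace] xr := by
    have hxr2 : xr = fun ω => Y (τ ω) ω + (1+ε) * f (τ ω) := by
      funext ω; simp only [hxr, hY]; ring
    rw [hxr2]
    exact hYτ.add (measurable_const.mul hfτ)
  set B : Set Ω := {ω | 0 ≤ Y (τ ω) ω} with hB
  have hBmeas : MeasurableSet[hτ.measurableSpace] B := measurableSet_le measurable_const hYτ
  have hBeq : {ω | ∃ s ∈ Set.Icc (n:ℝ) (M:ℝ), 0 ≤ (X s ω : ℝ) - (1+ε) * f s} = B := by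
    ext ω; exact hτiff ω
  set N : Ω → ℕ := fun ω => ⌊(1+ε/2) * f (τ ω)⌋₊ with hN
  obtain ⟨t0, ht0, hK⟩ := isCompact_Icc.exists_isMaxOn (Set.nonempty_Icc.mpr hnM)
      (hf_cont.continuousOn (s := Set.Icc (n:ℝ) (M:ℝ)))
  set mmax : ℕ := ⌊(1+ε/2) * f t0⌋₊ with hmmax
  have hNle : ∀ ω, N ω ≤ mmax := fun ω =>
    Nat.floor_le_floor (mul_le_mul_of_nonneg_left (hK (hτIcc ω)) (by linarith))
  set Sm : ℕ → Set Ω := fun m => B ∩ {ω | N ω = m} with hSm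
  have hSmmeas : ∀ m, MeasurableSet[hτ.measurableSpace] (Sm m) := by
    intro m
    apply hBmeas.inter
    have hpre : {ω | N ω = m} = (fun ω => (1+ε/2) * f (τ ω)) ⁻¹' (Set.Ico (m:ℝ) (m+1)) := by
      ext ω
      simp only [Set.mem_setOf_eq, Set.mem_preimage, Set.mem_Ico, hN]
      rw [Nat.floor_eq_iff (by nlinarith [hf_nn (τ ω)] : 0 ≤ (1+ε/2) * f (τ ω))]
    rw [hpre]
    exact (measurable_const.mul hfτ) measurableSet_Ico
  have hSmm : ∀ m, MeasurableSet (Sm m) := fun m => hmle _ (hSmmeas m)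
  set g : ℕ → Ω → ℝ := fun m ω => if Z (τ ω) ω ≤ m then (1:ℝ) else 0 with hg
  set F : ℕ → Ω → ℝ := fun m ω => ∑ k ∈ Finset.range (m + 1), poissonPMFReal (X (τ ω) ω) k
    with hF
  have hcoup : ∀ m, P[g m | hτ.measurableSpace] =ᵐ[P] F m := fun m => hcoupling τ hτ hτ0 m
  have hFpos : ∀ m ω, 0 < F m ω := by
    intro m ω
    have h0 : poissonPMFReal (X (τ ω) ω) 0 = Real.exp (-((X (τ ω) ω : ℝ))) := by
      unfold poissonPMFReal; simp
    have h1 : poissonPMFReal (X (τ ω) ω) 0 ≤ F m ω :=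
      Finset.single_le_sum (f := fun k => poissonPMFReal (X (τ ω) ω) k)
        (fun k _ => poissonPMFReal_nonneg) (Finset.mem_range.mpr (Nat.succ_pos m))
    calc (0:ℝ) < poissonPMFReal (X (τ ω) ω) 0 := by rw [h0]; exact Real.exp_pos _
      _ ≤ F m ω := h1
  have hgint : ∀ m, Integrable (g m) P := by
    intro m
    by_contra hcon
    have h0 : P[g m | hτ.measurableSpace] = 0 := condExp_of_not_integrable hcon
    have h1 := hcoup m
    rw [h0] at h1
    have hne : (ae P).NeBot := ae_neBot.mpr (IsProbabilityMeasure.ne_zero P)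
    obtain ⟨ω, hω⟩ := h1.exists
    have := hFpos m ω
    simp only [Pi.zero_apply] at hω
    rw [← hω] at this
    exact lt_irrefl 0 this
  set c : ℝ := Real.exp (-(pzHexp ε) * L) with hc
  have hFb : ∀ m, ∀ ω ∈ Sm m, F m ω ≤ c := by
    intro m ω hω
    obtain ⟨hωB, hωN⟩ := hω
    have hωB' : (0:ℝ) ≤ Y (τ ω) ω := hωB
    have hωN' : N ω = m := hωN
    have hfτ0 : 0 ≤ f (τ ω) := hf_nn _
    have hr : (1+ε) * f (τ ω) ≤ ((X (τ ω) ω : ℝ)) := by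
      simp only [hY] at hωB'; linarith
    have hm : (m:ℝ) ≤ (1+ε/2) * f (τ ω) := by
      rw [← hωN']
      exact Nat.floor_le (by nlinarith)
    refine (pz_poisson_bound hε hfτ0 (X (τ ω) ω) hr m hm).trans ?_
    rw [hc]
    apply Real.exp_le_exp.mpr
    have hh := pzHexp_pos hε
    have hLτ := hL (τ ω) (hτIcc ω).1
    nlinarith
  have hFmeas : ∀ m, Measurable (F m) := by
    intro m
    have hFeq : F m = fun ω =>
        ∑ k ∈ Finset.range (m+1), Real.exp (-(xr ω)) * (xr ω)^k / (k.factorial) := by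
      funext ω
      simp only [hF]
      refine Finset.sum_congr rfl fun k _ => ?_
      unfold poissonPMFReal
      rfl
    rw [hFeq]
    apply Finset.measurable_sum
    intro k _
    have hxm : Measurable xr := hxrmeas.mono hmle le_rfl
    exact (((hxm.neg.exp).mul (hxm.pow_const k)).div_const _)
  have hFint : ∀ m, Integrable (F m) P := by
    intro m
    apply Integrable.mono' (integrable_const (1:ℝ)) (hFmeas m).aestronglyMeasurable
    filter_upwards with ω
    rw [Real.norm_eq_abs, abs_of_nonneg
      (Finset.sum_nonneg fun k _ => poissonPMFReal_nonneg)]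
    exact sum_le_hasSum (Finset.range (m+1)) (fun k _ => poissonPMFReal_nonneg)
      (poissonPMFRealSum (X (τ ω) ω))
  have hint_le : ∀ m, ∫ ω in Sm m, g m ω ∂P ≤ c * (P (Sm m)).toReal := by
    intro m
    have h1 : ∫ ω in Sm m, g m ω ∂P = ∫ ω in Sm m, (P[g m | hτ.measurableSpace]) ω ∂P :=
      (setIntegral_condExp hmle (hgint m) (hSmmeas m)).symm
    have h2 : ∫ ω in Sm m, (P[g m | hτ.measurableSpace]) ω ∂P = ∫ ω in Sm m, F m ω ∂P :=
      setIntegral_congr_ae (hSmm m) ((hcoup m).mono fun ω hω _ => hω)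
    rw [h1, h2]
    calc ∫ ω in Sm m, F m ω ∂P ≤ ∫ _ω in Sm m, c ∂P :=
          setIntegral_mono_on ((hFint m).integrableOn) ((integrable_const c).integrableOn)
            (hSmm m) (hFb m)
      _ = (P (Sm m)).toReal • c := setIntegral_const c
      _ = c * (P (Sm m)).toReal := by rw [smul_eq_mul]; ring
  -- measurable modification machinery
  have hgae : ∀ m, AEStronglyMeasurable (g m) P := fun m => (hgint m).1
  set g' : ℕ → Ω → ℝ := fun m => (hgae m).mk (g m) with hg'
  have hg'meas : ∀ m, StronglyMeasurable (g' m) := fun m => (hgae m).stronglyMeasurable_mk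
  have hgg' : ∀ m, g m =ᵐ[P] g' m := fun m => (hgae m).ae_eq_mk
  set T : ℕ → Set Ω := fun m => {ω | g' m ω = 1} with hT
  have hTmeas : ∀ m, MeasurableSet (T m) :=
    fun m => (hg'meas m).measurable (measurableSet_singleton (1:ℝ))
  set bad : Set Ω := ⋃ m ∈ Finset.range (mmax+1), {ω | g m ω ≠ g' m ω} with hbad
  have hbadnull : P bad = 0 := by
    refine measure_biUnion_null_iff ((Finset.range (mmax+1)).countable_toSet) |>.mpr ?_
    intro m _
    exact ae_iff.mp (hgg' m)
  set J := toMeasurable P bad with hJ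
  have hJmeas : MeasurableSet J := measurableSet_toMeasurable P bad
  have hJ0 : P J = 0 := by rw [hJ, measure_toMeasurable]; exact hbadnull
  set E : Set Ω := (⋃ m ∈ Finset.range (mmax+1), (Sm m \ T m)) \ J with hE
  have hEmeas : MeasurableSet E := by
    apply MeasurableSet.diff _ hJmeas
    exact MeasurableSet.biUnion ((Finset.range (mmax+1)).countable_toSet)
      (fun m _ => (hSmm m).diff (hTmeas m))
  have hEsub : ∀ ω ∈ E, ∃ t : ℝ, (n:ℝ) ≤ t ∧ (1+ε/2) * f t < (Z t ω : ℝ) := by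
    intro ω hω
    obtain ⟨hω1, hω2⟩ := hω
    simp only [Set.mem_iUnion, Finset.mem_coe, Finset.mem_range, exists_prop] at hω1
    obtain ⟨m, hmlt, hωm⟩ := hω1
    obtain ⟨⟨hωB, hωN⟩, hωT⟩ := hωm
    have hgeq : g m ω = g' m ω := by
      by_contra hne
      refine hω2 (subset_toMeasurable P bad ?_)
      simp only [hbad, Set.mem_iUnion, Finset.mem_coe, Finset.mem_range, exists_prop]
      exact ⟨m, hmlt, hne⟩
    have hgne1 : g m ω ≠ 1 := by rw [hgeq]; exact hωT
    have hZgt : ¬ (Z (τ ω) ω ≤ m) := by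
      intro hle
      exact hgne1 (by simp only [hg, if_pos hle])
    push_neg at hZgt
    refine ⟨τ ω, (hτIcc ω).1, ?_⟩
    have h1 : (1+ε/2) * f (τ ω) < (N ω : ℝ) + 1 := Nat.lt_floor_add_one _
    have hωN' : N ω = m := hωN
    have h2 : ((N ω : ℝ)) + 1 ≤ (Z (τ ω) ω : ℝ) := by
      rw [hωN']
      exact_mod_cast hZgt
    linarith
  have hPT : ∀ m, P (Sm m ∩ T m) ≤ ENNReal.ofReal c * P (Sm m) := by
    intro m
    have h1 : (P (Sm m ∩ T m)).toReal
        = ∫ ω in Sm m, Set.indicator (T m) (fun _ => (1:ℝ)) ω ∂P := by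
      rw [setIntegral_indicator (hTmeas m), setIntegral_const]
      simp; rfl
    have h2 : ∫ ω in Sm m, Set.indicator (T m) (fun _ => (1:ℝ)) ω ∂P
        = ∫ ω in Sm m, g m ω ∂P := by
      apply setIntegral_congr_ae (hSmm m)
      filter_upwards [hgg' m] with ω hω
      intro _
      by_cases hz : Z (τ ω) ω ≤ m
      · have hgv : g m ω = 1 := by simp only [hg, if_pos hz]
        have hT1 : ω ∈ T m := by
          simp only [hT, Set.mem_setOf_eq, ← hω, hgv]
        simp [Set.indicator_apply, hT1, hgv]
      · have hgv : g m ω = 0 := by simp only [hg, if_neg hz]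
        have hT1 : ω ∉ T m := by
          simp only [hT, Set.mem_setOf_eq, ← hω, hgv]
          norm_num
        simp [Set.indicator_apply, hT1, hgv]
    have h3 : (P (Sm m ∩ T m)).toReal ≤ c * (P (Sm m)).toReal := by
      rw [h1, h2]; exact hint_le m
    calc P (Sm m ∩ T m) = ENNReal.ofReal ((P (Sm m ∩ T m)).toReal) :=
          (ENNReal.ofReal_toReal (measure_ne_top P _)).symm
      _ ≤ ENNReal.ofReal (c * (P (Sm m)).toReal) := ENNReal.ofReal_le_ofReal h3
      _ = ENNReal.ofReal c * ENNReal.ofReal ((P (Sm m)).toReal) :=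
          ENNReal.ofReal_mul (le_of_lt (Real.exp_pos _))
      _ = ENNReal.ofReal c * P (Sm m) := by rw [ENNReal.ofReal_toReal (measure_ne_top P _)]
  have hSmdisj : Set.PairwiseDisjoint (↑(Finset.range (mmax+1))) Sm := by
    intro a _ b _ hab
    refine Set.disjoint_left.mpr fun ω h1 h2 => hab ?_
    have ha : N ω = a := h1.2
    have hb : N ω = b := h2.2
    rw [← ha, hb]
  have hsum1 : ∑ m ∈ Finset.range (mmax+1), P (Sm m) ≤ 1 := by
    rw [← measure_biUnion_finset hSmdisj (fun m _ => hSmm m)]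
    calc P (⋃ m ∈ Finset.range (mmax+1), Sm m) ≤ P Set.univ := measure_mono (Set.subset_univ _)
      _ = 1 := measure_univ
  have hcover : B ⊆ E ∪ (J ∪ ⋃ m ∈ Finset.range (mmax+1), (Sm m ∩ T m)) := by
    intro ω hω
    by_cases hωJ : ω ∈ J
    · exact Or.inr (Or.inl hωJ)
    have hm : N ω ∈ Finset.range (mmax+1) := Finset.mem_range.mpr (Nat.lt_succ_of_le (hNle ω))
    have hωSm : ω ∈ Sm (N ω) := ⟨hω, rfl⟩
    by_cases hωT : ω ∈ T (N ω)
    · refine Or.inr (Or.inr ?_)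
      simp only [Set.mem_iUnion, Finset.mem_coe, exists_prop]
      exact ⟨N ω, hm, hωSm, hωT⟩
    · refine Or.inl ⟨?_, hωJ⟩
      simp only [Set.mem_iUnion, Finset.mem_coe, exists_prop]
      exact ⟨N ω, hm, hωSm, hωT⟩
  refine ⟨E, hEmeas, hEsub, ?_⟩
  rw [hBeq]
  calc P B ≤ P (E ∪ (J ∪ ⋃ m ∈ Finset.range (mmax+1), (Sm m ∩ T m))) := measure_mono hcover
    _ ≤ P E + P (J ∪ ⋃ m ∈ Finset.range (mmax+1), (Sm m ∩ T m)) := measure_union_le _ _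
    _ ≤ P E + (P J + P (⋃ m ∈ Finset.range (mmax+1), (Sm m ∩ T m))) :=
        add_le_add_right (measure_union_le _ _) _
    _ = P E + P (⋃ m ∈ Finset.range (mmax+1), (Sm m ∩ T m)) := by rw [hJ0, zero_add]
    _ ≤ P E + ∑ m ∈ Finset.range (mmax+1), P (Sm m ∩ T m) :=
        add_le_add_right (measure_biUnion_finset_le _ _) _
    _ ≤ P E + ∑ m ∈ Finset.range (mmax+1), ENNReal.ofReal c * P (Sm m) :=
        add_le_add_right (Finset.sum_le_sum fun m _ => hPT m) _
    _ = P E + ENNReal.ofReal c * ∑ m ∈ Finset.range (mmax+1), P (Sm m) := by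
        rw [Finset.mul_sum]
    _ ≤ P E + ENNReal.ofReal c * 1 :=
        add_le_add_right (mul_le_mul_right hsum1 _) _
    _ = P E + ENNReal.ofReal c := by rw [mul_one]

/-- Poissonization upper bound for the total mass of a superprocess: if the total mass
processes `|Z|` and `|X|` are coupled so that, at every (a.s. finite, nonnegative) stopping
time of the filtration of `X`, conditionally on the past of `X` the value `|Z|` is Poisson
with mean `|X|`, the total mass `|X|` has continuous paths, `f : [0,∞) → [0,∞)` is
continuous with `f(t) → ∞`, and almost surely `limsup_t |Z_t|/f(t) ≤ 1`, then almost surely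
`limsup_t |X_t|/f(t) ≤ 1`. -/
theorem poissonization_total_mass_upper
    {Ω : Type*} {mΩ : MeasurableSpace Ω} (P : Measure Ω) [IsProbabilityMeasure P]
    (ℱ : Filtration ℝ mΩ)
    (X : ℝ → Ω → ℝ≥0) (Z : ℝ → Ω → ℕ)
    (hXadapted : ∀ t, Measurable[ℱ t] (X t))
    (hXcont : ∀ ω, Continuous fun t => (X t ω : ℝ))
    (hZmeas : ∀ t : ℝ, Measurable (Z t))
    (f : ℝ → ℝ) (hf_cont : Continuous f) (hf_nn : ∀ t, 0 ≤ f t)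
    (hf_inf : Tendsto f atTop atTop)
    (hcoupling : ∀ (τ : Ω → ℝ) (hτ : IsStoppingTime ℱ (fun ω => (τ ω : WithTop ℝ))), (∀ ω, 0 ≤ τ ω) →
      ∀ n : ℕ,
        P[(fun ω => if Z (τ ω) ω ≤ n then (1:ℝ) else 0) | hτ.measurableSpace]
          =ᵐ[P] fun ω => ∑ k ∈ Finset.range (n + 1), poissonPMFReal (X (τ ω) ω) k)
    (hZ : ∀ᵐ ω ∂P, ∀ ε : ℝ, 0 < ε → ∀ᶠ t in atTop, (Z t ω : ℝ) ≤ (1 + ε) * f t) :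
    ∀ᵐ ω ∂P, ∀ ε : ℝ, 0 < ε → ∀ᶠ t in atTop, (X t ω : ℝ) ≤ (1 + ε) * f t := by
  classical
  have key : ∀ ε : ℝ, 0 < ε → ∀ᵐ ω ∂P, ∀ᶠ t in atTop, (X t ω : ℝ) ≤ (1 + ε) * f t := by
    intro ε hε
    have hbdd : ∀ n : ℕ, BddBelow (f '' Set.Ici (n:ℝ)) := fun n =>
      ⟨0, by rintro x ⟨t, _, rfl⟩; exact hf_nn t⟩
    set Lseq : ℕ → ℝ := fun n => sInf (f '' Set.Ici (n:ℝ)) with hLseq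
    have hLle : ∀ n : ℕ, ∀ t : ℝ, (n:ℝ) ≤ t → Lseq n ≤ f t := fun n t ht =>
      csInf_le (hbdd n) ⟨t, ht, rfl⟩
    have hLtop : Tendsto Lseq atTop atTop := by
      rw [tendsto_atTop]
      intro C
      obtain ⟨T, hT⟩ := eventually_atTop.mp (tendsto_atTop.mp hf_inf C)
      refine eventually_atTop.mpr ⟨⌈T⌉₊, fun n hn => ?_⟩
      refine le_csInf ⟨f n, n, Set.self_mem_Ici, rfl⟩ ?_
      rintro x ⟨t, ht, rfl⟩
      exact hT t (le_trans (Nat.le_ceil T) (le_trans (Nat.cast_le.mpr hn) ht))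
    have main' : ∀ n M : ℕ, ∃ E : Set Ω, MeasurableSet E ∧
        (∀ ω ∈ E, ∃ t : ℝ, (n:ℝ) ≤ t ∧ (1+ε/2) * f t < (Z t ω : ℝ)) ∧
        ((n:ℝ) ≤ (M:ℝ) →
          P {ω | ∃ s ∈ Set.Icc (n:ℝ) (M:ℝ), 0 ≤ (X s ω:ℝ) - (1+ε) * f s}
            ≤ P E + ENNReal.ofReal (Real.exp (-(pzHexp ε) * Lseq n))) := by
      intro n M
      by_cases h : (n:ℝ) ≤ (M:ℝ)
      · obtain ⟨E, h1, h2, h3⟩ := pz_main P ℱ X Z hXadapted hXcont f hf_cont hf_nn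
          hcoupling hε n M h (Lseq n) (hLle n)
        exact ⟨E, h1, h2, fun _ => h3⟩
      · exact ⟨∅, MeasurableSet.empty, fun ω hω => absurd hω (Set.notMem_empty ω),
          fun h' => absurd h' h⟩
    choose E hEmeas hEsub hEbound using main'
    set D : ℕ → Set Ω := fun n => ⋃ (m : ℕ) (_ : n ≤ m) (M : ℕ), E m M with hD
    have hDmeas : ∀ n, MeasurableSet (D n) := fun n =>
      MeasurableSet.iUnion fun m => MeasurableSet.iUnion fun _ =>
        MeasurableSet.iUnion fun M => hEmeas m M
    have hDanti : Antitone D := by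
      intro a b hab ω hω
      simp only [hD, Set.mem_iUnion] at hω ⊢
      obtain ⟨m, hm, M, hM⟩ := hω
      exact ⟨m, le_trans hab hm, M, hM⟩
    have hDsub : ∀ n : ℕ, ∀ ω ∈ D n, ∃ t : ℝ, (n:ℝ) ≤ t ∧ (1+ε/2) * f t < (Z t ω : ℝ) := by
      intro n ω hω
      simp only [hD, Set.mem_iUnion] at hω
      obtain ⟨m, hm, M, hM⟩ := hω
      obtain ⟨t, ht1, ht2⟩ := hEsub m M ω hM
      exact ⟨t, le_trans (Nat.cast_le.mpr hm) ht1, ht2⟩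
    have hG0 : P (⋂ n, D n) = 0 := by
      rw [measure_eq_zero_iff_ae_notMem]
      filter_upwards [hZ] with ω hω
      intro hmem
      obtain ⟨T, hT⟩ := eventually_atTop.mp (hω (ε/2) (by linarith))
      rw [Set.mem_iInter] at hmem
      obtain ⟨t, ht1, ht2⟩ := hDsub ⌈T⌉₊ ω (hmem ⌈T⌉₊)
      have h2 : (Z t ω : ℝ) ≤ (1+ε/2) * f t := hT t (le_trans (Nat.le_ceil T) ht1)
      linarith
    have hPD : Tendsto (fun n => P (D n)) atTop (𝓝 0) := by
      have h := tendsto_measure_iInter_atTop (μ := P)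
        (fun n => (hDmeas n).nullMeasurableSet) hDanti ⟨0, measure_ne_top P _⟩
      rw [hG0] at h
      exact h
    have hctend : Tendsto (fun n => ENNReal.ofReal (Real.exp (-(pzHexp ε) * Lseq n)))
        atTop (𝓝 0) := by
      have h1 : Tendsto (fun n => -(pzHexp ε) * Lseq n) atTop atBot := by
        apply Tendsto.const_mul_atTop_of_neg _ hLtop
        simpa using (pzHexp_pos hε)
      have h2 : Tendsto (fun n => Real.exp (-(pzHexp ε) * Lseq n)) atTop (𝓝 0) :=
        Real.tendsto_exp_atBot.comp h1
      have h3 := ENNReal.tendsto_ofReal h2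
      rwa [ENNReal.ofReal_zero] at h3
    have hBinf : ∀ n : ℕ, P {ω | ∃ t, (n:ℝ) ≤ t ∧ 0 ≤ (X t ω:ℝ) - (1+ε) * f t}
        ≤ P (D n) + ENNReal.ofReal (Real.exp (-(pzHexp ε) * Lseq n)) := by
      intro n
      have hunion : {ω | ∃ t, (n:ℝ) ≤ t ∧ 0 ≤ (X t ω:ℝ) - (1+ε) * f t}
          = ⋃ M : ℕ, {ω | ∃ s ∈ Set.Icc (n:ℝ) (((n + M : ℕ)):ℝ),
              0 ≤ (X s ω:ℝ) - (1+ε) * f s} := by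
        ext ω
        simp only [Set.mem_setOf_eq, Set.mem_iUnion]
        constructor
        · rintro ⟨t, ht1, ht2⟩
          refine ⟨⌈t⌉₊, t, ⟨ht1, ?_⟩, ht2⟩
          push_cast
          have h1 : t ≤ (⌈t⌉₊:ℝ) := Nat.le_ceil t
          have h2 : (0:ℝ) ≤ (n:ℕ) := Nat.cast_nonneg n
          linarith
        · rintro ⟨M, s, hs1, hs2⟩
          exact ⟨s, hs1.1, hs2⟩
      rw [hunion]
      have hmono : Monotone (fun M : ℕ => {ω | ∃ s ∈ Set.Icc (n:ℝ) (((n + M : ℕ)):ℝ),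
          0 ≤ (X s ω:ℝ) - (1+ε) * f s}) := by
        intro a b hab ω hω
        obtain ⟨s, hs1, hs2⟩ := hω
        refine ⟨s, ⟨hs1.1, le_trans hs1.2 ?_⟩, hs2⟩
        push_cast
        have : (a:ℝ) ≤ (b:ℝ) := Nat.cast_le.mpr hab
        linarith
      have htend := tendsto_measure_iUnion_atTop (μ := P) hmono
      refine le_of_tendsto htend (Eventually.of_forall fun M => ?_)
      have h := hEbound n (n+M) (by push_cast; linarith [(Nat.cast_nonneg M : (0:ℝ) ≤ (M:ℝ))])
      refine h.trans (add_le_add_left (measure_mono ?_) _)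
      intro ω hω
      simp only [hD, Set.mem_iUnion]
      exact ⟨n, le_rfl, n+M, hω⟩
    have hδ : P (⋂ n : ℕ, {ω | ∃ t, (n:ℝ) ≤ t ∧ 0 ≤ (X t ω:ℝ) - (1+ε) * f t}) = 0 := by
      have hle : ∀ n : ℕ,
          P (⋂ k : ℕ, {ω | ∃ t, (k:ℝ) ≤ t ∧ 0 ≤ (X t ω:ℝ) - (1+ε) * f t})
          ≤ P (D n) + ENNReal.ofReal (Real.exp (-(pzHexp ε) * Lseq n)) := fun n =>
        le_trans (measure_mono (Set.iInter_subset _ n)) (hBinf n)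
      have hlim : Tendsto (fun n => P (D n) + ENNReal.ofReal (Real.exp (-(pzHexp ε) * Lseq n)))
          atTop (𝓝 0) := by
        have := hPD.add hctend
        simpa using this
      exact le_antisymm (ge_of_tendsto hlim (Eventually.of_forall hle)) zero_le
    rw [measure_eq_zero_iff_ae_notMem] at hδ
    filter_upwards [hδ] with ω hω
    simp only [Set.mem_iInter, not_forall] at hω
    obtain ⟨n, hn⟩ := hω
    rw [Set.mem_setOf_eq] at hn
    push_neg at hn
    refine eventually_atTop.mpr ⟨n, fun t ht => ?_⟩
    have h := hn t ht
    linarith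
  have hall := ae_all_iff.mpr (fun k : ℕ => key (1/((k:ℝ)+1)) (by positivity))
  filter_upwards [hall] with ω hω ε hε
  obtain ⟨k, hk⟩ := exists_nat_one_div_lt hε
  filter_upwards [hω k] with t ht
  have hf0 := hf_nn t
  have h1 : (1 + 1/((k:ℝ)+1)) * f t ≤ (1+ε) * f t := by
    apply mul_le_mul_of_nonneg_right _ hf0
    linarith [hk.le]
  linarith
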